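/- Let O be a nonsymmetric operad. The maps φ_n : O^Dend(n) → O(n) defined by φ_n(f) = f^[1] + ⋯ + f^[n] form a morphism of nonsymmetric operads φ : O^Dend → O; that is, φ_{m+n−1}(f ∘ᵢ^Dend g) = φ_m(f) ∘ᵢ φ_n(g) for all f ∈ O^Dend(m), g ∈ O^Dend(n), 1 ≤ i ≤ m, and φ₁(1) = 1. -/

import Mathlib

universe u v

/-- A nonsymmetric operad in the category of `k`-modules: a collection of `k`-modules
`O n` for `n ≥ 1` (here defined for all `n : ℕ`, with only arities `≥ 1` relevant),
`k`-bilinear partial compositions `comp : O m → ℕ → O n → O (m + n - 1)` (the middle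
argument is the 1-based position `i`, `1 ≤ i ≤ m`), and an identity element `one ∈ O 1`,
satisfying the usual sequential/parallel associativity and unit axioms. -/
structure NSOperad (k : Type u) [CommRing k] where
  O : ℕ → Type v
  [instAdd : ∀ n, AddCommGroup (O n)]
  [instMod : ∀ n, Module k (O n)]
  comp : ∀ {m n : ℕ}, O m → ℕ → O n → O (m + n - 1)
  one : O 1
  comp_add_left : ∀ {m n : ℕ} (f f' : O m) (i : ℕ) (g : O n),
    comp (f + f') i g = comp f i g + comp f' i g
  comp_add_right : ∀ {m n : ℕ} (f : O m) (i : ℕ) (g g' : O n),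
    comp f i (g + g') = comp f i g + comp f i g'
  comp_smul_left : ∀ {m n : ℕ} (c : k) (f : O m) (i : ℕ) (g : O n),
    comp (c • f) i g = c • comp f i g
  comp_smul_right : ∀ {m n : ℕ} (c : k) (f : O m) (i : ℕ) (g : O n),
    comp f i (c • g) = c • comp f i g
  assoc₁ : ∀ {m n p : ℕ} (f : O m) (g : O n) (h : O p) (i j : ℕ)
    (hi1 : 1 ≤ i) (him : i ≤ m) (hj1 : 1 ≤ j) (hjn : j ≤ n) (hp : 1 ≤ p),
    comp (comp f i g) (i + j - 1) h =
      cast (congrArg O (by omega : m + (n + p - 1) - 1 = m + n - 1 + p - 1))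
        (comp f i (comp g j h))
  assoc₂ : ∀ {m n p : ℕ} (f : O m) (g : O n) (h : O p) (i j : ℕ)
    (hi1 : 1 ≤ i) (hij : i < j) (hjm : j ≤ m) (hn : 1 ≤ n) (hp : 1 ≤ p),
    comp (comp f i g) (j + n - 1) h =
      cast (congrArg O (by omega : m + p - 1 + n - 1 = m + n - 1 + p - 1))
        (comp (comp f j h) i g)
  comp_one : ∀ {m : ℕ} (f : O m) (i : ℕ), 1 ≤ i → i ≤ m → comp f i one = f
  one_comp : ∀ {m : ℕ} (f : O m), comp one 1 f = cast (congrArg O (by omega : m = 1 + m - 1)) f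

attribute [instance] NSOperad.instAdd NSOperad.instMod

namespace NSOperad

variable {k : Type u} [CommRing k]

/-- A multiplication on a nonsymmetric operad: `π ∈ O(2)` with `π ∘₁ π = π ∘₂ π`. -/
def IsMult (𝒪 : NSOperad k) (π : 𝒪.O 2) : Prop :=
  𝒪.comp π 1 π = 𝒪.comp π 2 π

/-- The Gerstenhaber (degree `-1` graded Lie) bracket
`⟦f, g⟧ = Σᵢ (−1)^{(n−1)(i−1)} f ∘ᵢ g − (−1)^{(m−1)(n−1)} Σᵢ (−1)^{(m−1)(i−1)} g ∘ᵢ f`. -/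
def bracket (𝒪 : NSOperad k) {m n : ℕ} (f : 𝒪.O m) (g : 𝒪.O n) : 𝒪.O (m + n - 1) :=
  (∑ i ∈ Finset.Icc 1 m, ((-1 : ℤ) ^ ((n - 1) * (i - 1))) • 𝒪.comp f i g)
    - ((-1 : ℤ) ^ ((m - 1) * (n - 1))) •
        ∑ i ∈ Finset.Icc 1 n,
          ((-1 : ℤ) ^ ((m - 1) * (i - 1))) •
            cast (congrArg 𝒪.O (by omega : n + m - 1 = m + n - 1)) (𝒪.comp g i f)

end NSOperad

namespace NSOperad

variable {k : Type u} [CommRing k]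

/-- A dendriform-multiplication on a nonsymmetric operad: a pair `(π_≺, π_≻)` of
elements of `O(2)` satisfying the three dendriform identities. -/
def IsDendMult (𝒪 : NSOperad k) (πl πr : 𝒪.O 2) : Prop :=
  𝒪.comp πl 1 πl = 𝒪.comp πl 2 (πl + πr) ∧
  𝒪.comp πl 1 πr = 𝒪.comp πr 2 πl ∧
  𝒪.comp πr 1 (πl + πr) = 𝒪.comp πr 2 πr

end NSOperad

namespace NSOperad

variable {k : Type u} [CommRing k]

/-- `O^Dend(n) = O(n) ⊕ ⋯ ⊕ O(n)` (`n` copies); an element `f` is written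
`(f^[1], …, f^[n])`, here as a function `Fin n → O n`. -/
abbrev ODend (𝒪 : NSOperad k) (n : ℕ) : Type v := Fin n → 𝒪.O n

/-- The (1-based) `r`-th component `f^[r]` of `f ∈ O^Dend(n)` (zero if `r` is out of
range). -/
def dnth (𝒪 : NSOperad k) {n : ℕ} (f : 𝒪.ODend n) (r : ℕ) : 𝒪.O n :=
  if h : 1 ≤ r ∧ r ≤ n then f ⟨r - 1, by omega⟩ else 0

/-- The partial compositions of `O^Dend` (components 1-based, `r = kk + 1`):
`(f ∘ᵢ^Dend g)^[r] = f^[r] ∘ᵢ (g^[1] + ⋯ + g^[n])` if `r ≤ i−1`;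
`(f ∘ᵢ^Dend g)^[r] = f^[i] ∘ᵢ g^[r−i+1]` if `i ≤ r ≤ i+n−1`;
`(f ∘ᵢ^Dend g)^[r] = f^[r−n+1] ∘ᵢ (g^[1] + ⋯ + g^[n])` if `i+n ≤ r ≤ m+n−1`. -/
def dcomp (𝒪 : NSOperad k) {m n : ℕ} (f : 𝒪.ODend m) (i : ℕ) (g : 𝒪.ODend n) :
    𝒪.ODend (m + n - 1) := fun kk =>
  let r := (kk : ℕ) + 1
  if r ≤ i - 1 then 𝒪.comp (𝒪.dnth f r) i (∑ s ∈ Finset.Icc 1 n, 𝒪.dnth g s)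
  else if r ≤ i + n - 1 then 𝒪.comp (𝒪.dnth f i) i (𝒪.dnth g (r - i + 1))
  else 𝒪.comp (𝒪.dnth f (r - n + 1)) i (∑ s ∈ Finset.Icc 1 n, 𝒪.dnth g s)

/-- The identity element of `O^Dend`, namely `1 ∈ O(1) = O^Dend(1)`. -/
def done (𝒪 : NSOperad k) : 𝒪.ODend 1 := fun _ => 𝒪.one

/-- Transport along an equality of arities. -/
def dcast (𝒪 : NSOperad k) {a b : ℕ} (h : a = b) (f : 𝒪.ODend a) : 𝒪.ODend b := h ▸ f

end NSOperad


namespace NSOperad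

variable {k : Type u} [CommRing k]

lemma comp_zero_left (𝒪 : NSOperad k) {m n : ℕ} (i : ℕ) (g : 𝒪.O n) :
    𝒪.comp (0 : 𝒪.O m) i g = 0 := by
  have h := 𝒪.comp_add_left (0 : 𝒪.O m) 0 i g
  simpa using h.symm

lemma comp_zero_right (𝒪 : NSOperad k) {m n : ℕ} (f : 𝒪.O m) (i : ℕ) :
    𝒪.comp f i (0 : 𝒪.O n) = 0 := by
  have h := 𝒪.comp_add_right f i (0 : 𝒪.O n) 0
  simpa using h.symm

lemma comp_sum_left (𝒪 : NSOperad k) {m n : ℕ} {α : Type*} (s : Finset α)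
    (F : α → 𝒪.O m) (i : ℕ) (g : 𝒪.O n) :
    𝒪.comp (∑ x ∈ s, F x) i g = ∑ x ∈ s, 𝒪.comp (F x) i g := by
  classical
  induction s using Finset.induction with
  | empty => simpa using 𝒪.comp_zero_left i g
  | @insert a s hx ih =>
    rw [Finset.sum_insert hx, Finset.sum_insert hx, 𝒪.comp_add_left, ih]

lemma comp_sum_right (𝒪 : NSOperad k) {m n : ℕ} {α : Type*} (s : Finset α)
    (f : 𝒪.O m) (i : ℕ) (G : α → 𝒪.O n) :
    𝒪.comp f i (∑ x ∈ s, G x) = ∑ x ∈ s, 𝒪.comp f i (G x) := by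
  classical
  induction s using Finset.induction with
  | empty => simpa using 𝒪.comp_zero_right f i
  | @insert a s hx ih =>
    rw [Finset.sum_insert hx, Finset.sum_insert hx, 𝒪.comp_add_right, ih]

end NSOperad

/-- The maps `φ_n : O^Dend(n) → O(n)`, `φ_n(f) = f^[1] + ⋯ + f^[n]`,
form a morphism of nonsymmetric operads `φ : O^Dend → O`:
`φ_{m+n−1}(f ∘ᵢ^Dend g) = φ_m(f) ∘ᵢ φ_n(g)` for `1 ≤ i ≤ m`, and `φ₁(1) = 1`. -/
theorem NSOperad.dend_sum_is_operad_morphism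
    {k : Type u} [CommRing k] [CharZero k] (𝒪 : NSOperad k) :
    (∀ {m n : ℕ} (f : 𝒪.ODend m) (g : 𝒪.ODend n) (i : ℕ), 1 ≤ i → i ≤ m →
      (∑ r ∈ Finset.Icc 1 (m + n - 1), 𝒪.dnth (𝒪.dcomp f i g) r) =
        𝒪.comp (∑ r ∈ Finset.Icc 1 m, 𝒪.dnth f r) i (∑ s ∈ Finset.Icc 1 n, 𝒪.dnth g s)) ∧
    (∑ r ∈ Finset.Icc 1 1, 𝒪.dnth 𝒪.done r) = 𝒪.one := by
  constructor
  · intro m n f g i hi1 him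
    by_cases hn : n = 0
    · subst hn
      have hg : ∀ s, 𝒪.dnth g s = (0 : 𝒪.O 0) := by
        intro s; unfold dnth; rw [dif_neg]; omega
      have hG : (∑ s ∈ Finset.Icc 1 0, 𝒪.dnth g s) = 0 := by simp
      rw [hG, 𝒪.comp_zero_right]
      apply Finset.sum_eq_zero
      intro r hr
      simp only [Finset.mem_Icc] at hr
      unfold dnth
      rw [dif_pos hr]
      unfold dcomp
      simp only [hG, hg]
      split
      · exact 𝒪.comp_zero_right _ i
      · split
        · exact 𝒪.comp_zero_right _ i
        · exact 𝒪.comp_zero_right _ i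
    · have hn1 : 1 ≤ n := by omega
      set G : 𝒪.O n := ∑ s ∈ Finset.Icc 1 n, 𝒪.dnth g s with hGdef
      have key : ∀ r ∈ Finset.Icc 1 (m + n - 1),
          𝒪.dnth (𝒪.dcomp f i g) r =
            if r ≤ i - 1 then 𝒪.comp (𝒪.dnth f r) i G
            else if r ≤ i + n - 1 then 𝒪.comp (𝒪.dnth f i) i (𝒪.dnth g (r - i + 1))
            else 𝒪.comp (𝒪.dnth f (r - n + 1)) i G := by
        intro r hr
        simp only [Finset.mem_Icc] at hr
        unfold dnth dcomp
        rw [dif_pos hr]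
        simp only
        have hr1 : r - 1 + 1 = r := by omega
        rw [hr1]
        rfl
      rw [Finset.sum_congr rfl key]
      have hIcc : ∀ a : ℕ, Finset.Icc 1 a = Finset.Ioc 0 a := by
        intro a; rw [← Finset.Icc_add_one_left_eq_Ioc, zero_add]
      rw [hIcc]
      have h1 : (0 : ℕ) ≤ i - 1 := Nat.zero_le _
      have h2 : i - 1 ≤ i + n - 1 := by omega
      have h3 : i + n - 1 ≤ m + n - 1 := by omega
      rw [← Finset.sum_Ioc_consecutive _ (le_trans h1 h2) h3,
          ← Finset.sum_Ioc_consecutive _ h1 h2]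
      -- simplify the three pieces
      have e1 : ∀ r ∈ Finset.Ioc 0 (i - 1),
          (if r ≤ i - 1 then 𝒪.comp (𝒪.dnth f r) i G
            else if r ≤ i + n - 1 then 𝒪.comp (𝒪.dnth f i) i (𝒪.dnth g (r - i + 1))
            else 𝒪.comp (𝒪.dnth f (r - n + 1)) i G) = 𝒪.comp (𝒪.dnth f r) i G := by
        intro r hr
        simp only [Finset.mem_Ioc] at hr
        rw [if_pos hr.2]
      have e2 : ∀ r ∈ Finset.Ioc (i - 1) (i + n - 1),
          (if r ≤ i - 1 then 𝒪.comp (𝒪.dnth f r) i G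
            else if r ≤ i + n - 1 then 𝒪.comp (𝒪.dnth f i) i (𝒪.dnth g (r - i + 1))
            else 𝒪.comp (𝒪.dnth f (r - n + 1)) i G) =
            𝒪.comp (𝒪.dnth f i) i (𝒪.dnth g (r - i + 1)) := by
        intro r hr
        simp only [Finset.mem_Ioc] at hr
        rw [if_neg (by omega), if_pos hr.2]
      have e3 : ∀ r ∈ Finset.Ioc (i + n - 1) (m + n - 1),
          (if r ≤ i - 1 then 𝒪.comp (𝒪.dnth f r) i G
            else if r ≤ i + n - 1 then 𝒪.comp (𝒪.dnth f i) i (𝒪.dnth g (r - i + 1))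
            else 𝒪.comp (𝒪.dnth f (r - n + 1)) i G) =
            𝒪.comp (𝒪.dnth f (r - n + 1)) i G := by
        intro r hr
        simp only [Finset.mem_Ioc] at hr
        rw [if_neg (by omega), if_neg (by omega)]
      rw [Finset.sum_congr rfl e1, Finset.sum_congr rfl e2, Finset.sum_congr rfl e3]
      -- middle sum reindex
      have mid : (∑ r ∈ Finset.Ioc (i - 1) (i + n - 1),
          𝒪.comp (𝒪.dnth f i) i (𝒪.dnth g (r - i + 1))) = 𝒪.comp (𝒪.dnth f i) i G := by
        rw [hGdef, 𝒪.comp_sum_right]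
        apply Finset.sum_nbij' (fun r => r - i + 1) (fun s => s + i - 1)
        · intro r hr; simp only [Finset.mem_Ioc] at hr; simp only [Finset.mem_Icc]; omega
        · intro s hs; simp only [Finset.mem_Icc] at hs; simp only [Finset.mem_Ioc]; omega
        · intro r hr; simp only [Finset.mem_Ioc] at hr; omega
        · intro s hs; simp only [Finset.mem_Icc] at hs; omega
        · intro r hr; rfl
      rw [mid]
      -- last sum reindex
      have last : (∑ r ∈ Finset.Ioc (i + n - 1) (m + n - 1),
          𝒪.comp (𝒪.dnth f (r - n + 1)) i G) =
          ∑ t ∈ Finset.Ioc i m, 𝒪.comp (𝒪.dnth f t) i G := by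
        apply Finset.sum_nbij' (fun r => r - n + 1) (fun t => t + n - 1)
        · intro r hr; simp only [Finset.mem_Ioc] at hr ⊢; omega
        · intro t ht; simp only [Finset.mem_Ioc] at ht ⊢; omega
        · intro r hr; simp only [Finset.mem_Ioc] at hr; omega
        · intro t ht; simp only [Finset.mem_Ioc] at ht; omega
        · intro r hr; rfl
      rw [last]
      -- merge first + middle
      have hi' : i - 1 + 1 = i := by omega
      have merge : (∑ r ∈ Finset.Ioc 0 (i - 1), 𝒪.comp (𝒪.dnth f r) i G)
          + 𝒪.comp (𝒪.dnth f i) i G = ∑ r ∈ Finset.Ioc 0 i, 𝒪.comp (𝒪.dnth f r) i G := by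
        rw [← hi', Finset.sum_Ioc_succ_top (by omega), hi']
      rw [add_assoc] at *
      calc (∑ r ∈ Finset.Ioc 0 (i-1), 𝒪.comp (𝒪.dnth f r) i G)
            + (𝒪.comp (𝒪.dnth f i) i G + ∑ t ∈ Finset.Ioc i m, 𝒪.comp (𝒪.dnth f t) i G)
          = (∑ r ∈ Finset.Ioc 0 i, 𝒪.comp (𝒪.dnth f r) i G)
            + ∑ t ∈ Finset.Ioc i m, 𝒪.comp (𝒪.dnth f t) i G := by
            rw [← merge, add_assoc]
        _ = ∑ r ∈ Finset.Ioc 0 m, 𝒪.comp (𝒪.dnth f r) i G :=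
            Finset.sum_Ioc_consecutive _ (by omega) him
        _ = 𝒪.comp (∑ r ∈ Finset.Icc 1 m, 𝒪.dnth f r) i G := by
            rw [𝒪.comp_sum_left, hIcc]
  · simp [dnth, done]
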